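/- The polynomial S(x) = x^{p-1} + 2x^{p-2} + ... + (p-1)x + p (for p ≥ 2) is coprime with its derivative S'(x); concretely, with a(x) = (−(p−1)/(p(p+1)))·x + 1/p and b(x) = (1/(p(p+1)))·x² − (1/(p(p+1)))·x, one has a(x)·S(x) + b(x)·S'(x) = 1. Consequently S has p−1 distinct complex roots. -/

import Mathlib

open Polynomial

/-- The polynomial `S(x) = x^(p-1) + 2x^(p-2) + ⋯ + (p-1)x + p`. -/
noncomputable def Spoly (p : ℕ) : Polynomial ℚ :=
  ∑ k ∈ Finset.range p, C ((p : ℚ) - k) * X ^ k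

lemma Spoly_key (p : ℕ) : (X - 1)^2 * Spoly p = X^(p+1) - C ((p:ℚ)+1) * X + C (p:ℚ) := by
  induction p with
  | zero => simp [Spoly]
  | succ n ih =>
    have hstep : Spoly (n+1) = Spoly n + ∑ k ∈ Finset.range (n+1), X ^ k := by
      unfold Spoly
      rw [Finset.sum_range_succ]
      push_cast
      have : ∀ k ∈ Finset.range n, C ((n:ℚ)+1-k) * X ^ k = C ((n:ℚ)-k) * X^k + X^k := by
        intro k hk
        rw [show ((n:ℚ)+1-k) = ((n:ℚ)-k)+1 by ring, C_add]
        simp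
        ring
      rw [Finset.sum_congr rfl this, Finset.sum_add_distrib, Finset.sum_range_succ]
      simp
      ring
    have hgeom : (∑ k ∈ Finset.range (n+1), (X:ℚ[X]) ^ k) * (X - 1) = X^(n+1) - 1 :=
      geom_sum_mul (X : ℚ[X]) (n+1)
    rw [hstep]
    push_cast
    simp only [C_add, C_1] at ih ⊢
    linear_combination ih + (X - 1) * hgeom

lemma Spoly_deriv (p : ℕ) (hp : 1 ≤ p) :
    2*(X-1)*Spoly p + (X-1)^2 * derivative (Spoly p)
      = C ((p:ℚ)+1) * X^p - C ((p:ℚ)+1) := by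
  have h := congrArg derivative (Spoly_key p)
  simp only [derivative_mul, derivative_pow, derivative_sub, derivative_add,
    derivative_X_pow, derivative_X, derivative_one, derivative_C] at h
  simp only [Nat.add_sub_cancel, pow_one, mul_one, sub_zero, mul_zero, zero_mul,
    add_zero, zero_add, Nat.cast_ofNat, Nat.cast_add, Nat.cast_one] at h
  rw [show (C 2 : ℚ[X]) = 2 by simp [show (2:ℚ)=1+1 by norm_num]; norm_num] at h
  push_cast at h
  linear_combination h


/-- `S` is coprime with its derivative, via the explicit Bézout identity
`a·S + b·S' = 1` with `a = (-(p-1)/(p(p+1)))·x + 1/p` and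
`b = (1/(p(p+1)))·x² - (1/(p(p+1)))·x`; consequently `S` has `p-1` distinct
complex roots. -/
theorem Spoly_coprime_derivative (p : ℕ) (hp : 2 ≤ p) :
    (C (-((p : ℚ) - 1) / (p * (p + 1))) * X + C (1 / (p : ℚ))) * Spoly p +
      (C (1 / ((p : ℚ) * (p + 1))) * X ^ 2 -
        C (1 / ((p : ℚ) * (p + 1))) * X) * (derivative (Spoly p)) = 1 ∧
    IsCoprime (Spoly p) (derivative (Spoly p)) ∧
    ((Spoly p).map (algebraMap ℚ ℂ)).roots.toFinset.card = p - 1 := by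
  have hp0 : (p:ℚ) ≠ 0 := by
    have : 0 < p := by omega
    exact_mod_cast this.ne'
  have hp1 : (p:ℚ) + 1 ≠ 0 := by positivity
  have h1 := Spoly_key p
  have h2 := Spoly_deriv p (by omega)
  simp only [C_add, C_1] at h1 h2
  have hU : C (p:ℚ) * (C (p:ℚ) + 1) * C (1/((p:ℚ)*(p+1))) = 1 := by
    rw [show (C (p:ℚ) + 1 : ℚ[X]) = C ((p:ℚ)+1) by simp, ← C_mul, ← C_mul,
      show (p:ℚ)*((p:ℚ)+1)*(1/((p:ℚ)*(p+1))) = 1 by field_simp, C_1]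
  have hbez : (C (-((p : ℚ) - 1) / (p * (p + 1))) * X + C (1 / (p : ℚ))) * Spoly p +
      (C (1 / ((p : ℚ) * (p + 1))) * X ^ 2 -
        C (1 / ((p : ℚ) * (p + 1))) * X) * (derivative (Spoly p)) = 1 := by
    rw [show -((p:ℚ)-1)/((p:ℚ)*(p+1)) = -((p:ℚ)-1) * (1/((p:ℚ)*(p+1))) by ring,
        show (1:ℚ)/(p:ℚ) = ((p:ℚ)+1) * (1/((p:ℚ)*(p+1))) by field_simp,
        C_mul, C_mul, C_neg, C_sub, C_add, C_1]
    have hK : (C (p:ℚ) * (C (p:ℚ) + 1) * (X - 1) : ℚ[X]) ≠ 0 := by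
      apply mul_ne_zero
      · rw [show (C (p:ℚ) + 1 : ℚ[X]) = C ((p:ℚ)+1) by simp, ← C_mul]
        exact C_ne_zero.mpr (mul_ne_zero hp0 hp1)
      · exact X_sub_C_ne_zero 1
    apply mul_left_cancel₀ hK
    linear_combination X * h2 - (C (p:ℚ) + 1) * h1
      + ((X-1) * ((-(C (p:ℚ) - 1)) * X + (C (p:ℚ) + 1)) * Spoly p
         + (X-1) * (X^2 - X) * derivative (Spoly p)) * hU
  have hcop : IsCoprime (Spoly p) (derivative (Spoly p)) := ⟨_, _, hbez⟩
  refine ⟨hbez, hcop, ?_⟩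
  have hsep : (Spoly p).Separable := hcop
  -- natDegree computations
  have hdR : (X^(p+1) - (C (p:ℚ) + 1) * X + C (p:ℚ)).natDegree = p + 1 := by
    compute_degree!
    simp [show p ≠ 0 by omega]
  have hS0 : Spoly p ≠ 0 := by
    intro h
    rw [h, mul_zero] at h1
    rw [← h1] at hdR
    simp at hdR
  have hdS : (Spoly p).natDegree = p - 1 := by
    have hX1 : ((X - 1 : ℚ[X]))^2 ≠ 0 := pow_ne_zero _ (X_sub_C_ne_zero 1)
    have := natDegree_mul hX1 hS0
    rw [h1, hdR] at this
    have h2deg : ((X - 1 : ℚ[X])^2).natDegree = 2 := by compute_degree!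
    omega
  have hmap := (Spoly p).map (algebraMap ℚ ℂ)
  have hnd : ((Spoly p).map (algebraMap ℚ ℂ)).roots.Nodup :=
    nodup_roots (hsep.map)
  rw [Multiset.toFinset_card_of_nodup hnd]
  have hsplit : Splits ((Spoly p).map (algebraMap ℚ ℂ)) :=
    IsAlgClosed.splits _
  rw [splits_iff_card_roots.mp hsplit, natDegree_map, hdS]
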